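/- arXiv:1805.00259 — 3 statements merged into one kernel-verified Lean document; each statement's English description precedes it below -/
import Mathlib

section
/- Assume f : ℝ → ℝ satisfies (f1) and (f5). Then the function t ↦ f(t)t − 4F(t) is strictly increasing on [0, ∞), where F(t) := ∫₀^t f(τ) dτ. -/
open MeasureTheory Filter Set Real

noncomputable section

/-- Euclidean space ℝ³. -/
abbrev E3 : Type := EuclideanSpace ℝ (Fin 3)

/-- Membership in the Sobolev space H¹(ℝ³): `u` and its gradient are in L². -/
def MemH1 (u : E3 → ℝ) : Prop :=
  MemLp u 2 (volume : Measure E3) ∧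
  MemLp (fun x => ‖gradient u x‖) 2 (volume : Measure E3)

/-- `u` is a radial function. -/
def Radial (u : E3 → ℝ) : Prop := ∀ x y : E3, ‖x‖ = ‖y‖ → u x = u y

/-- The Newtonian potential φ_u, solving −Δφ = u² in ℝ³. -/
def phiP (u : E3 → ℝ) (x : E3) : ℝ := (1 / (4 * π)) * ∫ y, u y ^ 2 / ‖x - y‖

/-- F(t) = ∫₀ᵗ f(τ) dτ. -/
def Fprim (f : ℝ → ℝ) (t : ℝ) : ℝ := ∫ τ in (0:ℝ)..t, f τ

/-- The energy functional I. -/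
def energy (f : ℝ → ℝ) (lam : ℝ) (u : E3 → ℝ) : ℝ :=
  (1/2) * (∫ x, (‖gradient u x‖ ^ 2 + u x ^ 2)) +
  (lam/4) * (∫ x, phiP u x * u x ^ 2) -
  ∫ x, Fprim f (u x)

/-- The derivative I'(u)[v]. -/
def Iprime (f : ℝ → ℝ) (lam : ℝ) (u v : E3 → ℝ) : ℝ :=
  (∫ x, ((inner ℝ (gradient u x) (gradient v x) : ℝ) + u x * v x)) +
  lam * (∫ x, phiP u x * u x * v x) -
  ∫ x, f (u x) * v x

/-- Positive part u⁺ = max{u,0}. -/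
def pPart (u : E3 → ℝ) : E3 → ℝ := fun x => max (u x) 0

/-- Negative part u⁻ = min{u,0}. -/
def nPart (u : E3 → ℝ) : E3 → ℝ := fun x => min (u x) 0

/-- `u` vanishes almost everywhere (i.e. `u ≡ 0` as an element of H¹). -/
def AeZero (u : E3 → ℝ) : Prop := u =ᵐ[(volume : Measure E3)] (fun _ => (0:ℝ))

/-- The squared H¹ norm. -/
def H1normSq (u : E3 → ℝ) : ℝ := ∫ x, (‖gradient u x‖ ^ 2 + u x ^ 2)

/-- The Nehari set N. -/
def nehari (f : ℝ → ℝ) (lam : ℝ) : Set (E3 → ℝ) :=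
  {u | MemH1 u ∧ Radial u ∧ ¬ AeZero u ∧ Iprime f lam u u = 0}

/-- The nodal Nehari set M. -/
def nodalNehari (f : ℝ → ℝ) (lam : ℝ) : Set (E3 → ℝ) :=
  {u | MemH1 u ∧ Radial u ∧ Iprime f lam u u = 0 ∧ Iprime f lam u (pPart u) = 0 ∧
       ¬ AeZero (pPart u) ∧ ¬ AeZero (nPart u)}

/-- (f1): continuity. -/
def F1 (f : ℝ → ℝ) : Prop := Continuous f

/-- (f2): oddness. -/
def F2 (f : ℝ → ℝ) : Prop := ∀ t : ℝ, f (-t) = - f t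

/-- (f3): lim_{t→0} f(t)/t = 0. -/
def F3 (f : ℝ → ℝ) : Prop := Tendsto (fun t => f t / t) (nhdsWithin 0 {(0:ℝ)}ᶜ) (nhds 0)

/-- (f4): lim_{t→∞} f(t)/t³ = 1 and f(t)/t³ < 1 for t ≠ 0. -/
def F4 (f : ℝ → ℝ) : Prop :=
  Tendsto (fun t => f t / t ^ 3) atTop (nhds 1) ∧ ∀ t : ℝ, t ≠ 0 → f t / t ^ 3 < 1

/-- (f5): t ↦ f(t)/t³ strictly increasing on (0,∞). -/
def F5 (f : ℝ → ℝ) : Prop := StrictMonoOn (fun t => f t / t ^ 3) (Set.Ioi 0)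

/-- (f6): f(t)t − 4F(t) → +∞ as t → ∞. -/
def F6 (f : ℝ → ℝ) : Prop := Tendsto (fun t => f t * t - 4 * Fprim f t) atTop atTop

/-- t ↦ f(t)t − 4F(t) is strictly increasing on [0,∞). -/
theorem stmt3 (f : ℝ → ℝ) (hf1 : F1 f) (hf5 : F5 f) :
    StrictMonoOn (fun t : ℝ => f t * t - 4 * Fprim f t) (Set.Ici 0) := by
  intro a ha b hb hab
  simp only [Set.mem_Ici] at ha hb
  have hb0 : 0 < b := lt_of_le_of_lt ha hab
  have hb3 : (0:ℝ) < b ^ 3 := pow_pos hb0 3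
  have hint : ∀ c d : ℝ, IntervalIntegrable f volume c d :=
    fun c d => hf1.intervalIntegrable c d
  have hF : Fprim f b - Fprim f a = ∫ τ in a..b, f τ := by
    unfold Fprim
    rw [← intervalIntegral.integral_interval_sub_left (hint 0 b) (hint 0 a)]
  set c : ℝ := f b / b ^ 3 with hc
  have hpos : 0 < ∫ τ in a..b, (c * τ ^ 3 - f τ) := by
    apply intervalIntegral.intervalIntegral_pos_of_pos_on
    · exact ((continuous_const.mul (continuous_pow 3)).sub hf1).intervalIntegrable a b
    · intro x hx
      have hx0 : 0 < x := lt_of_le_of_lt ha hx.1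
      have h5 := hf5 (Set.mem_Ioi.mpr hx0) (Set.mem_Ioi.mpr hb0) hx.2
      exact sub_pos.mpr ((div_lt_iff₀ (pow_pos hx0 3)).mp h5)
    · exact hab
  have hsplit : (∫ τ in a..b, (c * τ ^ 3 - f τ))
      = c * ((b ^ 4 - a ^ 4) / 4) - ∫ τ in a..b, f τ := by
    rw [intervalIntegral.integral_sub (f := fun τ => c * τ ^ 3)
        (((continuous_const.mul (continuous_pow 3))).intervalIntegrable a b) (hint a b),
      intervalIntegral.integral_const_mul, integral_pow]
    norm_num
  rw [hsplit] at hpos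
  have hIlt : ∫ τ in a..b, f τ < c * ((b ^ 4 - a ^ 4) / 4) := by linarith
  have hcb : c * b ^ 4 = f b * b := by
    field_simp [hc]
    rw [hc, div_mul_cancel₀ _ hb3.ne']
  have hca : f a * a ≤ c * a ^ 4 := by
    rcases eq_or_lt_of_le ha with h0 | ha0
    · simp [← h0]
    · have h5 := hf5 (Set.mem_Ioi.mpr ha0) (Set.mem_Ioi.mpr hb0) hab
      have ha3 : (0:ℝ) < a ^ 3 := pow_pos ha0 3
      have := (div_lt_iff₀ ha3).mp h5
      nlinarith
  simp only
  have : 4 * (Fprim f b - Fprim f a) < f b * b - f a * a := by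
    rw [hF]
    nlinarith
  linarith
end
end

section
/- Assume f : ℝ → ℝ satisfies (f1), (f2) and (f5). Then f(t)t − 4F(t) ≥ 0 for every t ∈ ℝ, where F(t) := ∫₀^t f(τ) dτ. -/
open MeasureTheory Filter Set Real

noncomputable section

lemma stmt4_pos (f : ℝ → ℝ) (hf1 : F1 f) (hf2 : F2 f) (hf5 : F5 f)
    (t : ℝ) (ht : 0 < t) : 0 ≤ f t * t - 4 * Fprim f t := by
  have hf1' : Continuous f := hf1
  have hf2' : ∀ s : ℝ, f (-s) = - f s := hf2
  have hf5' : StrictMonoOn (fun s => f s / s ^ 3) (Set.Ioi 0) := hf5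
  have hf0 : f 0 = 0 := by
    have := hf2' 0; simp at this; linarith
  have key : Fprim f t ≤ f t * t / 4 := by
    have hmono : ∀ x ∈ Set.Icc (0:ℝ) t, f x ≤ (f t / t ^ 3) * x ^ 3 := by
      intro x hx
      rcases eq_or_lt_of_le hx.1 with h0 | h0
      · simp [← h0, hf0]
      · have hratio : f x / x ^ 3 ≤ f t / t ^ 3 :=
          hf5'.monotoneOn h0 ht hx.2
        have hx3 : (0:ℝ) < x ^ 3 := by positivity
        calc f x = (f x / x ^ 3) * x ^ 3 := by field_simp
          _ ≤ (f t / t ^ 3) * x ^ 3 := by nlinarith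
    have hint1 : IntervalIntegrable f volume 0 t :=
      (hf1'.intervalIntegrable 0 t)
    have hint2 : IntervalIntegrable (fun x => (f t / t ^ 3) * x ^ 3) volume 0 t :=
      (Continuous.intervalIntegrable (by continuity) 0 t)
    have hle := intervalIntegral.integral_mono_on ht.le hint1 hint2 hmono
    have hcalc : (∫ x in (0:ℝ)..t, (f t / t ^ 3) * x ^ 3) = f t * t / 4 := by
      rw [intervalIntegral.integral_const_mul, integral_pow]
      have : t ^ 3 ≠ 0 := by positivity
      field_simp
      ring
    rw [hcalc] at hle
    exact hle
  linarith

/-- f(t)t − 4F(t) ≥ 0 for all t. -/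
theorem stmt4 (f : ℝ → ℝ) (hf1 : F1 f) (hf2 : F2 f) (hf5 : F5 f) :
    ∀ t : ℝ, 0 ≤ f t * t - 4 * Fprim f t := by
  intro t
  have hf2' : ∀ s : ℝ, f (-s) = - f s := hf2
  have hf0 : f 0 = 0 := by
    have := hf2' 0; simp at this; linarith
  rcases lt_trichotomy t 0 with ht | ht | ht
  · -- use evenness: Fprim f (-s) = Fprim f s
    have hFeven : Fprim f (-(-t)) = Fprim f (-t) := by
      unfold Fprim
      have h1 : (∫ τ in (0:ℝ)..(-t), f (-τ)) = ∫ τ in (-(-t))..(-(0:ℝ)), f τ := by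
        rw [intervalIntegral.integral_comp_neg f]
      have h2 : (∫ τ in (0:ℝ)..(-t), f (-τ)) = -∫ τ in (0:ℝ)..(-t), f τ := by
        simp only [hf2']
        exact intervalIntegral.integral_neg
      rw [h2] at h1
      simp only [neg_neg, neg_zero] at h1 ⊢
      rw [show (∫ τ in t..(0:ℝ), f τ) = -∫ τ in (0:ℝ)..t, f τ from
        (intervalIntegral.integral_symm 0 t)] at h1
      linarith
    have := stmt4_pos f hf1 hf2 hf5 (-t) (by linarith)
    simp only [neg_neg] at hFeven
    rw [hf2'] at this
    nlinarith
  · subst ht; simp [Fprim, hf0]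
  · exact stmt4_pos f hf1 hf2 hf5 t ht
end
end

section
/- Assume f : ℝ → ℝ satisfies (f1), (f2) and (f5), and let λ > 0. Then for every u in the Nehari set N one has I(u) = I(u) − (1/4)I'(u)[u] > ∫_{ℝ³} [ (1/4) f(u)u − F(u) ] dx ≥ 0; in particular I(u) > 0 for every u ∈ N, so I is bounded from below by 0 on N. -/
open MeasureTheory Filter Set Real

noncomputable section

lemma Fprim_even (f : ℝ → ℝ) (hf2 : F2 f) (t : ℝ) : Fprim f (-t) = Fprim f t := by
  have h : (∫ τ in t..(0:ℝ), f (-τ)) = ∫ τ in (0:ℝ)..(-t), f τ := by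
    simpa only [neg_zero] using intervalIntegral.integral_comp_neg (a := t) (b := 0) f
  have hf2' : ∀ s : ℝ, f (-s) = - f s := hf2
  have h2 : (∫ τ in t..(0:ℝ), f (-τ)) = -(∫ τ in t..(0:ℝ), f τ) := by
    simp only [hf2']
    exact intervalIntegral.integral_neg
  unfold Fprim
  rw [← h, h2, ← intervalIntegral.integral_symm]

lemma key_ineq (f : ℝ → ℝ) (hf1 : F1 f) (hf2 : F2 f) (hf5 : F5 f) (t : ℝ) :
    Fprim f t ≤ (1/4) * f t * t := by
  have hf0 : f 0 = 0 := by have := hf2 0; simp at this; linarith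
  have hpos : ∀ s : ℝ, 0 < s → Fprim f s ≤ (1/4) * f s * s := by
    intro s hs
    have hmono : ∀ τ ∈ Set.Icc (0:ℝ) s, f τ ≤ (f s / s ^ 3) * τ ^ 3 := by
      intro τ hτ
      rcases eq_or_lt_of_le hτ.1 with h0 | h0
      · simp [← h0, hf0]
      · have hle : f τ / τ ^ 3 ≤ f s / s ^ 3 := by
          rcases eq_or_lt_of_le hτ.2 with h1 | h1
          · rw [h1]
          · exact (hf5 h0 (lt_trans h0 h1) h1).le
        have hτ3 : (0:ℝ) < τ ^ 3 := pow_pos h0 3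
        calc f τ = f τ / τ ^ 3 * τ ^ 3 := by field_simp
        _ ≤ f s / s ^ 3 * τ ^ 3 := by
            exact mul_le_mul_of_nonneg_right hle hτ3.le
    have hint1 : IntervalIntegrable f volume 0 s := hf1.intervalIntegrable 0 s
    have hint2 : IntervalIntegrable (fun τ => (f s / s ^ 3) * τ ^ 3) volume 0 s := by
      exact (continuous_const.mul (continuous_pow 3)).intervalIntegrable 0 s
    have h1 : Fprim f s ≤ ∫ τ in (0:ℝ)..s, (f s / s ^ 3) * τ ^ 3 :=
      intervalIntegral.integral_mono_on hs.le hint1 hint2 hmono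
    have h2 : (∫ τ in (0:ℝ)..s, (f s / s ^ 3) * τ ^ 3) = (1/4) * f s * s := by
      rw [intervalIntegral.integral_const_mul, integral_pow]
      have hs' : s ≠ 0 := ne_of_gt hs
      field_simp
      ring
    linarith
  rcases lt_trichotomy t 0 with ht | ht | ht
  · have h := hpos (-t) (by linarith)
    rw [Fprim_even f hf2 t] at h
    rw [hf2] at h
    calc Fprim f t ≤ (1/4) * (-f t) * (-t) := h
    _ = (1/4) * f t * t := by ring
  · simp [ht, Fprim, hf0]
  · exact hpos t ht

/-- I is bounded below by 0 on the Nehari set. -/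
theorem stmt8 (f : ℝ → ℝ) (hf1 : F1 f) (hf2 : F2 f) (hf5 : F5 f)
    (lam : ℝ) (hlam : 0 < lam) :
    ∀ u ∈ nehari f lam,
      energy f lam u = energy f lam u - (1/4) * Iprime f lam u u ∧
      (∫ x, ((1/4) * f (u x) * u x - Fprim f (u x))) < energy f lam u ∧
      0 ≤ (∫ x, ((1/4) * f (u x) * u x - Fprim f (u x))) ∧
      0 < energy f lam u := by
  intro u hu
  obtain ⟨⟨hu2, hg2⟩, _hrad, hnz, hN⟩ := hu
  set A : ℝ := ∫ x, (‖gradient u x‖ ^ 2 + u x ^ 2) with hA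
  set B : ℝ := ∫ x, phiP u x * u x ^ 2 with hB
  set C : ℝ := ∫ x, Fprim f (u x) with hC
  set D : ℝ := ∫ x, f (u x) * u x with hD
  set J : ℝ := ∫ x, ((1/4) * f (u x) * u x - Fprim f (u x)) with hJ
  -- pointwise nonnegativity of the integrand of J
  have hgnn : ∀ x, 0 ≤ (1/4) * f (u x) * u x - Fprim f (u x) := fun x =>
    sub_nonneg.2 (key_ineq f hf1 hf2 hf5 (u x))
  have hJnn : 0 ≤ J := integral_nonneg hgnn
  -- A with integrability
  have hintA : Integrable (fun x => ‖gradient u x‖ ^ 2 + u x ^ 2) (volume : Measure E3) := by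
    have h1 : Integrable (fun x => ‖gradient u x‖ ^ 2) (volume : Measure E3) :=
      hg2.integrable_sq
    exact h1.add hu2.integrable_sq
  have hAnn : 0 ≤ A := integral_nonneg fun x => by positivity
  have hApos : 0 < A := by
    rcases hAnn.lt_or_eq with h | h
    · exact h
    · exfalso
      have h0 : (fun x => ‖gradient u x‖ ^ 2 + u x ^ 2) =ᵐ[(volume : Measure E3)] 0 := by
        rw [← integral_eq_zero_iff_of_nonneg (fun x => by positivity) hintA]
        exact h.symm
      apply hnz
      filter_upwards [h0] with x hx
      have h1 : u x ^ 2 = 0 := by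
        have := sq_nonneg (u x); have := sq_nonneg ‖gradient u x‖
        simp only [Pi.zero_apply] at hx
        nlinarith
      exact pow_eq_zero_iff (n := 2) (by norm_num) |>.mp h1
  have hBnn : 0 ≤ B := by
    apply integral_nonneg
    intro x
    apply mul_nonneg _ (sq_nonneg _)
    apply mul_nonneg
    · positivity
    · exact integral_nonneg fun y => div_nonneg (sq_nonneg _) (norm_nonneg _)
  -- Iprime u u = A + lam * B - D
  have hNe : A + lam * B - D = 0 := by
    have e1 : (∫ x, ((inner ℝ (gradient u x) (gradient u x) : ℝ) + u x * u x)) = A := by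
      apply integral_congr_ae; apply Eventually.of_forall; intro x
      simp only [real_inner_self_eq_norm_sq]; ring
    have e2 : (∫ x, phiP u x * u x * u x) = B := by
      apply integral_congr_ae; apply Eventually.of_forall; intro x
      simp only; ring
    rw [← e1, ← e2, hD]; exact hN
  -- energy = (1/2)A + (lam/4)B - C
  have hE : energy f lam u = (1/2) * A + (lam/4) * B - C := rfl
  have hP : Integrable (fun x => f (u x) * u x) (volume : Measure E3) := by
    by_contra hP
    rw [hD, integral_undef hP] at hNe
    nlinarith
  have hEpos : J < energy f lam u ∧ 0 < energy f lam u := by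
    by_cases hQ : Integrable (fun x => Fprim f (u x)) (volume : Measure E3)
    · have hgint : Integrable (fun x => (1/4) * f (u x) * u x - Fprim f (u x))
          (volume : Measure E3) := by
        have h4 : Integrable (fun x => (1/4) * f (u x) * u x) (volume : Measure E3) :=
          (hP.const_mul (1/4)).congr (Eventually.of_forall fun x => by ring)
        exact h4.sub hQ
      have hJeq : J = (1/4) * D - C := by
        rw [hJ, integral_sub ((hP.const_mul (1/4)).congr
          (Eventually.of_forall fun x => by ring)) hQ]
        rw [hD, hC]
        congr 1
        rw [← MeasureTheory.integral_const_mul]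
        apply integral_congr_ae; apply Eventually.of_forall; intro x; simp only; ring
      constructor <;> [skip; skip] <;> rw [hE] <;> nlinarith
    · have hgni : ¬ Integrable (fun x => (1/4) * f (u x) * u x - Fprim f (u x))
          (volume : Measure E3) := by
        intro hgi
        apply hQ
        have h4 : Integrable (fun x => (1/4) * f (u x) * u x) (volume : Measure E3) :=
          (hP.const_mul (1/4)).congr (Eventually.of_forall fun x => by ring)
        exact (h4.sub hgi).congr (Eventually.of_forall fun x => by
          simp only [Pi.sub_apply]; ring)
      have hJ0 : J = 0 := by rw [hJ]; exact integral_undef hgni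
      have hC0 : C = 0 := by rw [hC]; exact integral_undef hQ
      constructor <;> rw [hE] <;> nlinarith
  refine ⟨by rw [hN]; ring, hEpos.1, hJnn, hEpos.2⟩
end
end
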